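/- Let 𝕜 be ℝ or ℂ, H an n-dimensional inner product space over 𝕜 with orthonormal basis (h₁,…,h_n), 1 ≤ n₁ < ⋯ < n_q < n, and σ = (σ₁,…,σ_q) a general Schubert symbol of type (n₁,…,n_q,n). Then G_σ(n₁,…,n_q,H) = G(n₁,…,n_q,H) ∩ ∏_{k=1}^q G_{σ_q⋯σ_{k+1}σ_k}(n_k,H); that is, a flag (X¹,…,X^q) has Schubert symbol (σ₁,…,σ_q) if and only if for every k the subspace X^k has Schubert symbol σ_q⋯σ_{k+1}σ_k relative to the complete flag (H_i) on H. -/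

import Mathlib

open scoped InnerProductSpace

noncomputable section

/-- `e` is an open cell in `X` with characteristic map `f : Dⁿ → X`:
`f` is continuous on the closed unit ball, and restricts to a homeomorphism
(i.e. an embedding) of the open unit ball onto `e`. -/
def IsCellMap {X : Type*} [TopologicalSpace X] {n : ℕ}
    (f : EuclideanSpace ℝ (Fin n) → X) (e : Set X) : Prop :=
  ContinuousOn f (Metric.closedBall 0 1) ∧
  Topology.IsEmbedding ((Metric.ball (0 : EuclideanSpace ℝ (Fin n)) 1).restrict f) ∧
  f '' Metric.ball 0 1 = e

/-- `e` is an open cell of dimension `n` in `X`. -/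
def IsOpenCell {X : Type*} [TopologicalSpace X] (e : Set X) (n : ℕ) : Prop :=
  ∃ f : EuclideanSpace ℝ (Fin n) → X, IsCellMap f e

/-- The Stiefel manifold of inner-product-preserving linear maps `𝕜ⁿ → N`,
topologized as a subspace of the normed space of continuous linear maps. -/
abbrev Stiefel (𝕜 : Type*) [RCLike 𝕜] (n : ℕ) (N : Type*) [NormedAddCommGroup N]
    [InnerProductSpace 𝕜 N] : Type _ :=
  { u : EuclideanSpace 𝕜 (Fin n) →L[𝕜] N // ∀ x y, (inner 𝕜 (u x) (u y) : 𝕜) = inner 𝕜 x y }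

variable (𝕜 : Type*) [RCLike 𝕜]

/-- `E_k`: the span of the first `k+1` standard basis vectors (`0`-based index `k`). -/
def Ek (n : ℕ) (k : Fin n) : Submodule 𝕜 (EuclideanSpace 𝕜 (Fin n)) :=
  Submodule.span 𝕜 {x | ∃ i : Fin n, i ≤ k ∧ x = EuclideanSpace.single i (1 : 𝕜)}

/-- The Schubert cell `V_σ(n,N)` in the Stiefel manifold, relative to the orthonormal
basis `b` of `N`. -/
def VCell {n m : ℕ} {N : Type*} [NormedAddCommGroup N] [InnerProductSpace 𝕜 N]
    (b : OrthonormalBasis (Fin m) 𝕜 N) (σ : Fin n → Fin m) : Set (Stiefel 𝕜 n N) :=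
  { u | ∀ k : Fin n,
      (∀ x ∈ Ek 𝕜 n k, u.1 x ∈ Submodule.span 𝕜 (⇑b '' {j : Fin m | j ≤ σ k})) ∧
      ∃ r : ℝ, 0 < r ∧ (inner 𝕜 (u.1 (EuclideanSpace.single k (1 : 𝕜))) (b (σ k)) : 𝕜) = (r : 𝕜) }

/-- The dimension `d(σ) = Σₖ (σ(k) - k)` of an elementary Schubert symbol. -/
def dSigma {n m : ℕ} (σ : Fin n → Fin m) : ℕ := ∑ k : Fin n, ((σ k : ℕ) - (k : ℕ))

/-- The equivalence relation on `V(n,H)` identifying maps with the same image. -/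
def grassmannSetoid (n : ℕ) (H : Type*) [NormedAddCommGroup H] [InnerProductSpace 𝕜 H] :
    Setoid (Stiefel 𝕜 n H) :=
  ⟨fun u v => LinearMap.range (u.1 : EuclideanSpace 𝕜 (Fin n) →L[𝕜] H).toLinearMap =
    LinearMap.range v.1.toLinearMap,
   ⟨fun _ => rfl, Eq.symm, Eq.trans⟩⟩

/-- The Grassmann manifold `G(n,H)` with the quotient topology. -/
abbrev Grassmann (n : ℕ) (H : Type*) [NormedAddCommGroup H] [InnerProductSpace 𝕜 H] : Type _ :=
  Quotient (grassmannSetoid 𝕜 n H)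

/-- A point of `G(n,H)` as an `n`-dimensional subspace of `H`. -/
def Grassmann.rangeOf {n : ℕ} {H : Type*} [NormedAddCommGroup H] [InnerProductSpace 𝕜 H] :
    Grassmann 𝕜 n H → Submodule 𝕜 H :=
  Quotient.lift (fun u => LinearMap.range u.1.toLinearMap) (fun _ _ h => h)

/-- The (1-based) Schubert symbol `σ_X(k) = min { i : dim (X ∩ F i) ≥ k }` of a
subspace `X` relative to a flag `F`. -/
def schubertSigma {K W : Type*} [Ring K] [AddCommGroup W] [Module K W]
    (X : Submodule K W) (F : ℕ → Submodule K W) (k : ℕ) : ℕ :=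
  sInf {i : ℕ | k ≤ Module.finrank K ↥(X ⊓ F i)}

/-- The complete flag associated to an (ordered) orthonormal basis:
`basisFlag b i = span(b₁, …, b_i)` (1-based `i`). -/
def basisFlag {m : ℕ} {N : Type*} [NormedAddCommGroup N] [InnerProductSpace 𝕜 N]
    (b : OrthonormalBasis (Fin m) 𝕜 N) (i : ℕ) : Submodule 𝕜 N :=
  Submodule.span 𝕜 (⇑b '' {j : Fin m | (j : ℕ) < i})

/-- The Schubert cell `G_σ(n,H)` inside the Grassmannian of `n`-dimensional
subspaces of `H`, viewed as a set of submodules. -/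
def GCellSub {n m : ℕ} {H : Type*} [NormedAddCommGroup H] [InnerProductSpace 𝕜 H]
    (b : OrthonormalBasis (Fin m) 𝕜 H) (σ : Fin n → Fin m) : Set (Submodule 𝕜 H) :=
  { X | Module.finrank 𝕜 ↥X = n ∧
        ∀ k : Fin n, schubertSigma X (basisFlag 𝕜 b) ((k : ℕ) + 1) = (σ k : ℕ) + 1 }

/-- The Schubert cell `G_σ(n,H)` as a subset of the Grassmann manifold. -/
def GCell {n m : ℕ} {H : Type*} [NormedAddCommGroup H] [InnerProductSpace 𝕜 H]
    (b : OrthonormalBasis (Fin m) 𝕜 H) (σ : Fin n → Fin m) : Set (Grassmann 𝕜 n H) :=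
  { x | ∀ k : Fin n,
      schubertSigma (Grassmann.rangeOf 𝕜 x) (basisFlag 𝕜 b) ((k : ℕ) + 1) = (σ k : ℕ) + 1 }

/-- Composition of inner-product-preserving maps. -/
def scomp {n q : ℕ} {N : Type*} [NormedAddCommGroup N] [InnerProductSpace 𝕜 N]
    (v : Stiefel 𝕜 q N) (u : Stiefel 𝕜 n (EuclideanSpace 𝕜 (Fin q))) : Stiefel 𝕜 n N :=
  ⟨v.1.comp u.1, fun x y => by
    simp only [ContinuousLinearMap.comp_apply]
    rw [v.2, u.2]⟩

/-- The identity as an inner-product-preserving map. -/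
def sid (n : ℕ) : Stiefel 𝕜 n (EuclideanSpace 𝕜 (Fin n)) :=
  ⟨ContinuousLinearMap.id 𝕜 _, fun _ _ => rfl⟩


section Chains

variable (𝕜 : Type*) [RCLike 𝕜]

/-- Iterated composition `u_{j-1} ∘ ⋯ ∘ u_1 ∘ u_0` of a chain of
inner-product-preserving maps (`0`-based). -/
def chainComp (m : ℕ → ℕ)
    (u : ∀ i : ℕ, Stiefel 𝕜 (m i) (EuclideanSpace 𝕜 (Fin (m (i+1))))) :
    (j : ℕ) → Stiefel 𝕜 (m 0) (EuclideanSpace 𝕜 (Fin (m j)))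
  | 0 => sid 𝕜 (m 0)
  | (j+1) => scomp 𝕜 (u j) (chainComp m u j)

/-- Iterated composition `τ_{j-1} ∘ ⋯ ∘ τ_1 ∘ τ_0` of a chain of Schubert symbols. -/
def symbComp (m : ℕ → ℕ) (τ : ∀ i : ℕ, Fin (m i) → Fin (m (i+1))) :
    (j : ℕ) → Fin (m 0) → Fin (m j)
  | 0 => id
  | (j+1) => τ j ∘ symbComp m τ j

end Chains

section Flags

variable (𝕜 : Type*) [RCLike 𝕜]

/-- The generalized Stiefel manifold `V(n₁,…,n_q,H)` (with `q = Q+1`,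
`nn k = n_{k+1}` 0-based): tuples of isometric embeddings with nested images. -/
abbrev FlagStiefel (nn : ℕ → ℕ) (Q : ℕ) (H : Type*) [NormedAddCommGroup H]
    [InnerProductSpace 𝕜 H] : Type _ :=
  { v : ∀ k : Fin (Q+1), Stiefel 𝕜 (nn k.1) H //
      ∀ k l : Fin (Q+1), k ≤ l → LinearMap.range (v k).1.toLinearMap ≤ LinearMap.range (v l).1.toLinearMap }

/-- A general Schubert symbol of type `(n₁,…,n_q, n)` (with `q = Q+1`,
`nn k = n_{k+1}` 0-based and `nn (Q+1) = n`). -/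
abbrev SymbolFamily (nn : ℕ → ℕ) (Q : ℕ) : Type _ :=
  ∀ k : Fin (Q+1), Fin (nn k.1) → Fin (nn (k.1+1))

/-- The dimension `d(σ) = Σ_k Σ_i (σ_k(i) − i)` of a general Schubert symbol. -/
def dGen {nn : ℕ → ℕ} {Q : ℕ} (σ : SymbolFamily nn Q) : ℕ :=
  ∑ k : Fin (Q+1), ∑ i : Fin (nn k.1), ((σ k i : ℕ) - (i : ℕ))

/-- The cell `V_σ(n₁,…,n_q,H)`: the image under the composition homeomorphism `ψ`
of the product of the cells `V_{σ_k}(n_k, n_{k+1})` and `V_{σ_q}(n_q, H)`. -/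
def GenVCell (nn : ℕ → ℕ) (Q : ℕ) {H : Type*} [NormedAddCommGroup H]
    [InnerProductSpace 𝕜 H] (b : OrthonormalBasis (Fin (nn (Q+1))) 𝕜 H)
    (σ : SymbolFamily nn Q) : Set (FlagStiefel 𝕜 nn Q H) :=
  { v | v.1 (Fin.last Q) ∈ VCell 𝕜 b (σ (Fin.last Q)) ∧
      ∃ u : ∀ k : ℕ, Stiefel 𝕜 (nn k) (EuclideanSpace 𝕜 (Fin (nn (k+1)))),
        (∀ (k : ℕ) (h : k < Q),
            u k ∈ VCell 𝕜 (EuclideanSpace.basisFun (Fin (nn (k+1))) 𝕜)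
              (σ ⟨k, Nat.lt_succ_of_lt h⟩)) ∧
        ∀ (k : ℕ) (h : k < Q),
          v.1 ⟨k, Nat.lt_succ_of_lt h⟩ = scomp 𝕜 (v.1 ⟨k+1, Nat.succ_lt_succ h⟩) (u k) }

/-- The flag manifold `G(n₁,…,n_q,H)` as a subspace of the product of Grassmannians. -/
abbrev FlagManifold (nn : ℕ → ℕ) (Q : ℕ) (H : Type*) [NormedAddCommGroup H]
    [InnerProductSpace 𝕜 H] : Type _ :=
  { x : ∀ k : Fin (Q+1), Grassmann 𝕜 (nn k.1) H //
      ∀ k l : Fin (Q+1), k ≤ l → Grassmann.rangeOf 𝕜 (x k) ≤ Grassmann.rangeOf 𝕜 (x l) }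

/-- The quotient map `p(n₁,…,n_q,H) : V(n₁,…,n_q,H) → G(n₁,…,n_q,H)`. -/
def flagQuot (nn : ℕ → ℕ) (Q : ℕ) {H : Type*} [NormedAddCommGroup H]
    [InnerProductSpace 𝕜 H] (v : FlagStiefel 𝕜 nn Q H) : FlagManifold 𝕜 nn Q H :=
  ⟨fun k => Quotient.mk (grassmannSetoid 𝕜 (nn k.1) H) (v.1 k), fun k l h => v.2 k l h⟩

end Flags

section Induced

variable {K W : Type*} [Ring K] [AddCommGroup W] [Module K W]

/-- Iterated induced flags: `indFlag Q F0 Xn 0 = F0` is the complete flag on the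
ambient space, and `indFlag Q F0 Xn (j+1)` is the complete flag induced on
`Xn (Q-j)` by the flag `indFlag Q F0 Xn j` on the next space. -/
def indFlag (Q : ℕ) (F0 : ℕ → Submodule K W) (Xn : ℕ → Submodule K W) :
    ℕ → ℕ → Submodule K W
  | 0 => F0
  | (j+1) => fun i =>
      Xn (Q - j) ⊓ indFlag Q F0 Xn j (schubertSigma (Xn (Q - j)) (indFlag Q F0 Xn j) i)

/-- The `k`-th component of the Schubert symbol of the flag `Xn`: the Schubert symbol of
`Xn k` inside the completely flagged space `Xn (k+1)` (the ambient space when `k = Q`). -/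
def flagSymbol (Q : ℕ) (F0 : ℕ → Submodule K W) (Xn : ℕ → Submodule K W) (k i : ℕ) : ℕ :=
  schubertSigma (Xn k) (indFlag Q F0 Xn (Q - k)) i

end Induced

section FlagCells

variable (𝕜 : Type*) [RCLike 𝕜]

/-- A tuple of submodules, extended by `⊤` (the ambient space) beyond index `Q`. -/
def tupleExt {Q : ℕ} {H : Type*} [NormedAddCommGroup H] [InnerProductSpace 𝕜 H]
    (Xt : ∀ _ : Fin (Q+1), Submodule 𝕜 H) (j : ℕ) : Submodule 𝕜 H :=
  if h : j < Q + 1 then Xt ⟨j, h⟩ else ⊤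

/-- The set `G(n₁,…,n_q,H)` of flags, as tuples of submodules. -/
def GFlagSet (nn : ℕ → ℕ) (Q : ℕ) (H : Type*) [NormedAddCommGroup H]
    [InnerProductSpace 𝕜 H] : Set (∀ _ : Fin (Q+1), Submodule 𝕜 H) :=
  { Xt | (∀ k : Fin (Q+1), Module.finrank 𝕜 ↥(Xt k) = nn k.1) ∧
      ∀ k l : Fin (Q+1), k ≤ l → Xt k ≤ Xt l }

/-- The Schubert cell `G_σ(n₁,…,n_q,H)`, as a set of tuples of submodules. -/
def GFlagCellSub (nn : ℕ → ℕ) (Q : ℕ) {H : Type*} [NormedAddCommGroup H]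
    [InnerProductSpace 𝕜 H] (b : OrthonormalBasis (Fin (nn (Q+1))) 𝕜 H)
    (σ : SymbolFamily nn Q) : Set (∀ _ : Fin (Q+1), Submodule 𝕜 H) :=
  { Xt | Xt ∈ GFlagSet 𝕜 nn Q H ∧
      ∀ (k : Fin (Q+1)) (i : Fin (nn k.1)),
        flagSymbol Q (basisFlag 𝕜 b) (tupleExt 𝕜 Xt) k.1 (i.1+1) = (σ k i : ℕ) + 1 }

/-- The Schubert cell `G_σ(n₁,…,n_q,H)` as a subset of the flag manifold. -/
def GFlagCellQ (nn : ℕ → ℕ) (Q : ℕ) {H : Type*} [NormedAddCommGroup H]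
    [InnerProductSpace 𝕜 H] (b : OrthonormalBasis (Fin (nn (Q+1))) 𝕜 H)
    (σ : SymbolFamily nn Q) : Set (FlagManifold 𝕜 nn Q H) :=
  { x | ∀ (k : Fin (Q+1)) (i : Fin (nn k.1)),
      flagSymbol Q (basisFlag 𝕜 b)
        (tupleExt 𝕜 (fun l => Grassmann.rangeOf 𝕜 (x.1 l))) k.1 (i.1+1) = (σ k i : ℕ) + 1 }

end FlagCells

section Aux63

set_option linter.unusedSectionVars false

variable {𝕜 : Type*} [RCLike 𝕜] {H : Type*} [NormedAddCommGroup H] [InnerProductSpace 𝕜 H]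
  [FiniteDimensional 𝕜 H]

private lemma aux_ss_le {X : Submodule 𝕜 H} {F : ℕ → Submodule 𝕜 H} {k i : ℕ}
    (h : k ≤ Module.finrank 𝕜 ↥(X ⊓ F i)) : schubertSigma X F k ≤ i :=
  Nat.sInf_le h

private lemma aux_ss_mem {X : Submodule 𝕜 H} {F : ℕ → Submodule 𝕜 H} {k i : ℕ}
    (h : k ≤ Module.finrank 𝕜 ↥(X ⊓ F i)) :
    k ≤ Module.finrank 𝕜 ↥(X ⊓ F (schubertSigma X F k)) := by
  have hne : {j : ℕ | k ≤ Module.finrank 𝕜 ↥(X ⊓ F j)}.Nonempty := ⟨i, h⟩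
  exact Nat.sInf_mem hne

private lemma aux_ss_zero (X : Submodule 𝕜 H) (F : ℕ → Submodule 𝕜 H) :
    schubertSigma X F 0 = 0 :=
  Nat.sInf_eq_zero.mpr (Or.inl (Nat.zero_le _))

private lemma aux_one_le_ss {X : Submodule 𝕜 H} {F : ℕ → Submodule 𝕜 H} {k i : ℕ}
    (h0 : F 0 = ⊥) (hk : 1 ≤ k) (h : k ≤ Module.finrank 𝕜 ↥(X ⊓ F i)) :
    1 ≤ schubertSigma X F k := by
  by_contra h'
  push_neg at h'
  rw [Nat.lt_one_iff] at h'
  have hmem := aux_ss_mem h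
  rw [h', h0, inf_bot_eq] at hmem
  rw [finrank_bot] at hmem
  omega

/-- Invariant for (partial) complete flags relative to a subspace `X`. -/
private def AuxFlagged (d : ℕ) (F : ℕ → Submodule 𝕜 H) (X : Submodule 𝕜 H) : Prop :=
  F 0 = ⊥ ∧ (∀ i j, i ≤ j → j ≤ d → F i ≤ F j) ∧ X ≤ F d

private lemma aux_flagged_basis {m : ℕ} (b : OrthonormalBasis (Fin m) 𝕜 H)
    (X : Submodule 𝕜 H) : AuxFlagged m (basisFlag 𝕜 b) X := by
  refine ⟨?_, ?_, ?_⟩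
  · have h1 : {j : Fin m | (j : ℕ) < 0} = ∅ := by ext j; simp
    rw [basisFlag, h1, Set.image_empty, Submodule.span_empty]
  · intro i j hij _
    exact Submodule.span_mono (Set.image_mono fun x hx => lt_of_lt_of_le hx hij)
  · have h1 : {j : Fin m | (j : ℕ) < m} = Set.univ := by ext j; simp [j.2]
    have h2 : basisFlag 𝕜 b m = ⊤ := by
      rw [basisFlag, h1, Set.image_univ, ← OrthonormalBasis.coe_toBasis b]
      exact b.toBasis.span_eq
    rw [h2]; exact le_top

private lemma aux_flagged_step {d : ℕ} {F : ℕ → Submodule 𝕜 H} {X Y : Submodule 𝕜 H}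
    (hF : AuxFlagged d F X) (hYX : Y ≤ X) :
    AuxFlagged (Module.finrank 𝕜 ↥X)
      (fun i => X ⊓ F (schubertSigma X F i)) Y := by
  obtain ⟨hF0, hFmono, hXd⟩ := hF
  have hXFd : X ⊓ F d = X := inf_eq_left.mpr hXd
  refine ⟨?_, ?_, ?_⟩
  · show X ⊓ F (schubertSigma X F 0) = ⊥
    rw [aux_ss_zero, hF0, inf_bot_eq]
  · intro i j hij hj
    have hjmem : (j : ℕ) ≤ Module.finrank 𝕜 ↥(X ⊓ F (schubertSigma X F j)) :=
      aux_ss_mem (i := d) (by rw [hXFd]; exact hj)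
    have hnej : schubertSigma X F j ≤ d := aux_ss_le (by rw [hXFd]; exact hj)
    have hmono : schubertSigma X F i ≤ schubertSigma X F j :=
      aux_ss_le (le_trans hij hjmem)
    exact inf_le_inf_left X (hFmono _ _ hmono hnej)
  · have hmem : Module.finrank 𝕜 ↥X ≤
        Module.finrank 𝕜 ↥(X ⊓ F (schubertSigma X F (Module.finrank 𝕜 ↥X))) :=
      aux_ss_mem (i := d) (by rw [hXFd])
    have h2 : X ⊓ F (schubertSigma X F (Module.finrank 𝕜 ↥X)) = X :=
      Submodule.eq_of_le_of_finrank_le inf_le_left hmem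
    show Y ≤ X ⊓ F (schubertSigma X F (Module.finrank 𝕜 ↥X))
    rw [h2]; exact hYX

/-- The key composition property of Schubert symbols along an inclusion `Y ≤ X`. -/
private lemma aux_key {d : ℕ} {F : ℕ → Submodule 𝕜 H} {X Y : Submodule 𝕜 H}
    (hF : AuxFlagged d F X) (hYX : Y ≤ X) {k : ℕ} (hk1 : 1 ≤ k)
    (hkY : k ≤ Module.finrank 𝕜 ↥Y) :
    1 ≤ schubertSigma Y (fun i => X ⊓ F (schubertSigma X F i)) k ∧
    schubertSigma Y (fun i => X ⊓ F (schubertSigma X F i)) k ≤ Module.finrank 𝕜 ↥X ∧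
    schubertSigma Y F k =
      schubertSigma X F (schubertSigma Y (fun i => X ⊓ F (schubertSigma X F i)) k) := by
  obtain ⟨hF0, hFmono, hXd⟩ := hF
  set G : ℕ → Submodule 𝕜 H := fun i => X ⊓ F (schubertSigma X F i) with hG
  have hXFd : X ⊓ F d = X := inf_eq_left.mpr hXd
  have hYFd : Y ⊓ F d = Y := inf_eq_left.mpr (le_trans hYX hXd)
  have hYG : ∀ j, Y ⊓ (X ⊓ F j) = Y ⊓ F j := by
    intro j; rw [← inf_assoc, inf_eq_left.mpr hYX]
  have hkYFd : k ≤ Module.finrank 𝕜 ↥(Y ⊓ F d) := by rw [hYFd]; exact hkY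
  have hdX_mem : Module.finrank 𝕜 ↥X ≤
      Module.finrank 𝕜 ↥(X ⊓ F (schubertSigma X F (Module.finrank 𝕜 ↥X))) :=
    aux_ss_mem (i := d) (by rw [hXFd])
  have hGtop : X ⊓ F (schubertSigma X F (Module.finrank 𝕜 ↥X)) = X :=
    Submodule.eq_of_le_of_finrank_le inf_le_left hdX_mem
  have hrarg : k ≤ Module.finrank 𝕜 ↥(Y ⊓ G (Module.finrank 𝕜 ↥X)) := by
    show k ≤ Module.finrank 𝕜 ↥(Y ⊓ (X ⊓ F (schubertSigma X F (Module.finrank 𝕜 ↥X))))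
    rw [hGtop, inf_eq_left.mpr hYX]; exact hkY
  have hr_le : schubertSigma Y G k ≤ Module.finrank 𝕜 ↥X := aux_ss_le hrarg
  have hG0 : G 0 = ⊥ := by
    show X ⊓ F (schubertSigma X F 0) = ⊥
    rw [aux_ss_zero, hF0, inf_bot_eq]
  have hr1 : 1 ≤ schubertSigma Y G k := aux_one_le_ss hG0 hk1 hrarg
  have hr_mem : k ≤ Module.finrank 𝕜
      ↥(Y ⊓ F (schubertSigma X F (schubertSigma Y G k))) := by
    have h := aux_ss_mem hrarg
    rwa [show Y ⊓ G (schubertSigma Y G k) =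
      Y ⊓ F (schubertSigma X F (schubertSigma Y G k)) from hYG _] at h
  have h_le1 : schubertSigma Y F k ≤ schubertSigma X F (schubertSigma Y G k) :=
    aux_ss_le hr_mem
  have ht_mem : k ≤ Module.finrank 𝕜 ↥(Y ⊓ F (schubertSigma Y F k)) := aux_ss_mem hkYFd
  have ht_le_d : schubertSigma Y F k ≤ d := aux_ss_le hkYFd
  set t := schubertSigma Y F k with hT
  set istar := Module.finrank 𝕜 ↥(X ⊓ F t) with hIs
  have h6 : schubertSigma X F istar ≤ t := aux_ss_le le_rfl
  have h6m : istar ≤ Module.finrank 𝕜 ↥(X ⊓ F (schubertSigma X F istar)) :=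
    aux_ss_mem le_rfl
  have h7 : X ⊓ F (schubertSigma X F istar) = X ⊓ F t :=
    Submodule.eq_of_le_of_finrank_le (inf_le_inf_left X (hFmono _ _ h6 ht_le_d)) h6m
  have h8 : k ≤ Module.finrank 𝕜 ↥(Y ⊓ G istar) := by
    show k ≤ Module.finrank 𝕜 ↥(Y ⊓ (X ⊓ F (schubertSigma X F istar)))
    rw [h7, hYG]; exact ht_mem
  have h_r_le_istar : schubertSigma Y G k ≤ istar := aux_ss_le h8
  have h9 : schubertSigma X F (schubertSigma Y G k) ≤ t := aux_ss_le h_r_le_istar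
  exact ⟨hr1, hr_le, le_antisymm h_le1 h9⟩

/-- The iterated induced flags are genuine partial flags on the corresponding spaces. -/
private lemma aux_chain {Q : ℕ} {nn : ℕ → ℕ} (Xn F0 : ℕ → Submodule 𝕜 H)
    (hbase : AuxFlagged (nn (Q+1)) F0 (⊤ : Submodule 𝕜 H))
    (hXnrank : ∀ l, l ≤ Q → Module.finrank 𝕜 ↥(Xn l) = nn l)
    (hXnmono : ∀ a b', a ≤ b' → Xn a ≤ Xn b') :
    ∀ j, j ≤ Q → AuxFlagged (nn (Q - j + 1)) (indFlag Q F0 Xn j) (Xn (Q - j)) := by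
  intro j
  induction j with
  | zero =>
    intro _
    exact ⟨hbase.1, hbase.2.1, le_trans le_top hbase.2.2⟩
  | succ j ih =>
    intro hj
    have hj' : j ≤ Q := by omega
    have hstep := aux_flagged_step (ih hj') (hXnmono (Q - (j+1)) (Q - j) (by omega))
    rw [hXnrank (Q - j) (by omega)] at hstep
    have e1 : Q - (j+1) + 1 = Q - j := by omega
    rw [e1]
    exact hstep

/-- The bridge lemma: the Schubert symbol of a subspace `Y` of the `(Q-j)`-th space of
a flag, relative to the ambient complete flag, is the composite of its symbol relative
to the `j`-times induced flag with the symbols of the higher spaces of the flag. -/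
private lemma aux_bridge {Q : ℕ} {nn : ℕ → ℕ} (σ : SymbolFamily nn Q)
    (Cf : ℕ → ℕ → ℕ)
    (hCtop : ∀ m', Cf (Q+1) m' = m')
    (hCcomp : ∀ (k : ℕ) (hk : k < Q+1) (m') (hm : m' < nn k),
      Cf k m' = Cf (k+1) ((σ ⟨k, hk⟩ ⟨m', hm⟩ : Fin (nn (k+1))) : ℕ))
    (Xn F0 : ℕ → Submodule 𝕜 H)
    (hbase : AuxFlagged (nn (Q+1)) F0 (⊤ : Submodule 𝕜 H))
    (hXnrank : ∀ l, l ≤ Q → Module.finrank 𝕜 ↥(Xn l) = nn l)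
    (hXnmono : ∀ a b', a ≤ b' → Xn a ≤ Xn b') :
    ∀ j, j ≤ Q →
      (∀ (l : ℕ) (hl : l < Q + 1), Q - j < l → ∀ i : Fin (nn l),
        schubertSigma (Xn l) (indFlag Q F0 Xn (Q - l)) (i.1 + 1) = (σ ⟨l, hl⟩ i : ℕ) + 1) →
      ∀ (Y : Submodule 𝕜 H) (m : ℕ), Y ≤ Xn (Q - j) → 1 ≤ m →
        m ≤ Module.finrank 𝕜 ↥Y →
      ∃ m', m' < nn (Q - j + 1) ∧
        schubertSigma Y (indFlag Q F0 Xn j) m = m' + 1 ∧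
        schubertSigma Y F0 m = Cf (Q - j + 1) m' + 1 := by
  intro j
  induction j with
  | zero =>
    intro _ _ Y m _ hm1 hmY
    simp only [Nat.sub_zero]
    have hYF : AuxFlagged (nn (Q+1)) F0 Y := ⟨hbase.1, hbase.2.1, le_trans le_top hbase.2.2⟩
    have hYd : Y ⊓ F0 (nn (Q+1)) = Y := inf_eq_left.mpr hYF.2.2
    have harg : m ≤ Module.finrank 𝕜 ↥(Y ⊓ F0 (nn (Q+1))) := by rw [hYd]; exact hmY
    have h1 : 1 ≤ schubertSigma Y F0 m := aux_one_le_ss hYF.1 hm1 harg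
    have h2 : schubertSigma Y F0 m ≤ nn (Q+1) := aux_ss_le harg
    refine ⟨schubertSigma Y F0 m - 1, by omega, ?_, ?_⟩
    · show schubertSigma Y F0 m = schubertSigma Y F0 m - 1 + 1
      omega
    · rw [hCtop]; omega
  | succ j ih =>
    intro hj HA Y m hY hm1 hmY
    have hj' : j ≤ Q := by omega
    have hXle : Xn (Q - (j+1)) ≤ Xn (Q - j) := hXnmono _ _ (by omega)
    have hYX : Y ≤ Xn (Q - j) := le_trans hY hXle
    have hflag : AuxFlagged (nn (Q - j + 1)) (indFlag Q F0 Xn j) (Xn (Q - j)) :=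
      aux_chain Xn F0 hbase hXnrank hXnmono j hj'
    obtain ⟨hr1, hrle, heq⟩ := aux_key hflag hYX hm1 hmY
    have hGdef : (fun i => Xn (Q - j) ⊓
        (indFlag Q F0 Xn j) (schubertSigma (Xn (Q - j)) (indFlag Q F0 Xn j) i)) =
        indFlag Q F0 Xn (j+1) := rfl
    rw [hGdef] at hr1 hrle heq
    rw [hXnrank (Q - j) (by omega)] at hrle
    set r := schubertSigma Y (indFlag Q F0 Xn (j+1)) m with hrdef
    have hm'lt : r - 1 < nn (Q - j) := by omega
    have hQj : Q - j < Q + 1 := by omega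
    have hAl : schubertSigma (Xn (Q - j)) (indFlag Q F0 Xn j) (r - 1 + 1) =
        ((σ ⟨Q - j, hQj⟩ ⟨r - 1, hm'lt⟩ : Fin (nn (Q - j + 1))) : ℕ) + 1 := by
      have h := HA (Q - j) hQj (by omega) ⟨r - 1, hm'lt⟩
      rw [show Q - (Q - j) = j by omega] at h
      exact h
    rw [show r - 1 + 1 = r by omega] at hAl
    rw [hAl] at heq
    have HAj : ∀ (l : ℕ) (hl : l < Q + 1), Q - j < l → ∀ i : Fin (nn l),
        schubertSigma (Xn l) (indFlag Q F0 Xn (Q - l)) (i.1 + 1) = (σ ⟨l, hl⟩ i : ℕ) + 1 :=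
      fun l hl hgt i => HA l hl (by omega) i
    obtain ⟨m'', hm''lt, h1, h2⟩ := ih hj' HAj Y m hYX hm1 hmY
    rw [heq] at h1
    have hm''eq : m'' = ((σ ⟨Q - j, hQj⟩ ⟨r - 1, hm'lt⟩ : Fin (nn (Q - j + 1))) : ℕ) := by
      omega
    refine ⟨r - 1, ?_, by omega, ?_⟩
    · rw [show Q - (j+1) + 1 = Q - j by omega]; exact hm'lt
    · rw [show Q - (j+1) + 1 = Q - j by omega]
      rw [hCcomp (Q - j) hQj (r - 1) hm'lt]
      rw [h2, hm''eq]

end Aux63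

/-- Lemma 6.3: a flag `(X¹,…,X^q)` has Schubert symbol `σ = (σ₁,…,σ_q)` (each `σ_k`
computed in the completely flagged space `X^{k+1}`) if and only if each `X^k` has
Schubert symbol `c_k = σ_q⋯σ_{k+1}σ_k` relative to the complete flag of `H`; i.e.
`G_σ(n₁,…,n_q,H) = G(n₁,…,n_q,H) ∩ ∏_k G_{c_k}(n_k,H)`. -/
theorem gFlagCell_eq_inter_composite_cells
    (𝕜 : Type*) [RCLike 𝕜] (H : Type*) [NormedAddCommGroup H] [InnerProductSpace 𝕜 H]
    [FiniteDimensional 𝕜 H] (nn : ℕ → ℕ) (Q : ℕ)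
    (h0 : 0 < nn 0) (hchain : ∀ k ≤ Q, nn k < nn (k + 1))
    (b : OrthonormalBasis (Fin (nn (Q + 1))) 𝕜 H)
    (σ : SymbolFamily nn Q) (hσ : ∀ k, StrictMono (σ k))
    (c : ∀ k : Fin (Q + 1), Fin (nn k.1) → Fin (nn (Q + 1)))
    (hclast : c (Fin.last Q) = σ (Fin.last Q))
    (hcstep : ∀ (k : ℕ) (h : k < Q),
      c ⟨k, Nat.lt_succ_of_lt h⟩ =
        c ⟨k + 1, Nat.succ_lt_succ h⟩ ∘ σ ⟨k, Nat.lt_succ_of_lt h⟩) :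
    GFlagCellSub 𝕜 nn Q b σ =
      GFlagSet 𝕜 nn Q H ∩
        { Xt : ∀ _ : Fin (Q + 1), Submodule 𝕜 H |
          ∀ (k : Fin (Q + 1)) (i : Fin (nn k.1)),
            schubertSigma (Xt k) (basisFlag 𝕜 b) (i.1 + 1) = (c k i : ℕ) + 1 } := by
  classical
  ext Xt
  simp only [GFlagCellSub, Set.mem_inter_iff, Set.mem_setOf_eq]
  have keyiff : Xt ∈ GFlagSet 𝕜 nn Q H →
      ((∀ (k : Fin (Q+1)) (i : Fin (nn k.1)),
          flagSymbol Q (basisFlag 𝕜 b) (tupleExt 𝕜 Xt) k.1 (i.1+1) = (σ k i : ℕ) + 1) ↔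
       (∀ (k : Fin (Q+1)) (i : Fin (nn k.1)),
          schubertSigma (Xt k) (basisFlag 𝕜 b) (i.1+1) = (c k i : ℕ) + 1)) := by
    rintro ⟨hrank, hmono⟩
    -- basic facts about the extended tuple
    have hXnl : ∀ (l : ℕ) (hl : l < Q + 1), tupleExt 𝕜 Xt l = Xt ⟨l, hl⟩ := by
      intro l hl; simp [tupleExt, hl]
    have hXnrank : ∀ l, l ≤ Q → Module.finrank 𝕜 ↥(tupleExt 𝕜 Xt l) = nn l := by
      intro l hl
      rw [hXnl l (by omega)]; exact hrank _
    have hXnmono : ∀ a b', a ≤ b' → tupleExt 𝕜 Xt a ≤ tupleExt 𝕜 Xt b' := by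
      intro a b' hab
      by_cases hb : b' < Q + 1
      · rw [hXnl a (by omega), hXnl b' hb]
        exact hmono _ _ hab
      · have : tupleExt 𝕜 Xt b' = ⊤ := by simp [tupleExt, hb]
        rw [this]; exact le_top
    have hbase : AuxFlagged (nn (Q+1)) (basisFlag 𝕜 b) (⊤ : Submodule 𝕜 H) :=
      aux_flagged_basis b ⊤
    -- the composite symbols, as an ℕ-valued function
    set Cf : ℕ → ℕ → ℕ := fun k m' =>
      if h : k < Q + 1 ∧ m' < nn k then ((c ⟨k, h.1⟩ ⟨m', h.2⟩ : Fin (nn (Q+1))) : ℕ)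
      else m' with hCf
    have hCtop : ∀ m', Cf (Q+1) m' = m' := by
      intro m'
      simp only [hCf]
      exact dif_neg fun h => absurd h.1 (by omega)
    have hCeq : ∀ (k : ℕ) (hk : k < Q + 1) (m') (hm : m' < nn k),
        Cf k m' = ((c ⟨k, hk⟩ ⟨m', hm⟩ : Fin (nn (Q+1))) : ℕ) := by
      intro k hk m' hm
      simp only [hCf]
      exact dif_pos ⟨hk, hm⟩
    have hCcomp : ∀ (k : ℕ) (hk : k < Q+1) (m') (hm : m' < nn k),
        Cf k m' = Cf (k+1) ((σ ⟨k, hk⟩ ⟨m', hm⟩ : Fin (nn (k+1))) : ℕ) := by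
      intro k hk m' hm
      rcases Nat.lt_or_ge k Q with hkQ | hkQ
      · have hk1 : k + 1 < Q + 1 := by omega
        rw [hCeq k hk m' hm, hCeq (k+1) hk1 _ (σ ⟨k, hk⟩ ⟨m', hm⟩).2]
        have hs : c ⟨k, hk⟩ = c ⟨k+1, hk1⟩ ∘ σ ⟨k, hk⟩ := hcstep k hkQ
        rw [hs]
        rfl
      · have hkQ' : k = Q := by omega
        subst hkQ'
        rw [hCeq k hk m' hm, hCtop]
        exact congrArg Fin.val (congrFun hclast ⟨m', hm⟩)
    have hCcomp' : ∀ (k : Fin (Q+1)) (i : Fin (nn k.1)),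
        Cf k.1 i.1 = Cf (k.1+1) ((σ k i : Fin (nn (k.1+1))) : ℕ) :=
      fun k i => hCcomp k.1 k.2 i.1 i.2
    have hCeq' : ∀ (k : Fin (Q+1)) (i : Fin (nn k.1)),
        Cf k.1 i.1 = ((c k i : Fin (nn (Q+1))) : ℕ) :=
      fun k i => hCeq k.1 k.2 i.1 i.2
    -- injectivity of the composite symbols
    have cinj : ∀ j (k : ℕ) (hk : k < Q + 1), Q - k = j → Function.Injective (c ⟨k, hk⟩) := by
      intro j
      induction j with
      | zero =>
        intro k hk hj
        have hkQ : k = Q := by omega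
        subst hkQ
        have hs : c ⟨k, hk⟩ = σ ⟨k, hk⟩ := hclast
        rw [hs]
        exact (hσ _).injective
      | succ j ih =>
        intro k hk hj
        have hkQ : k < Q := by omega
        have hk1 : k + 1 < Q + 1 := by omega
        have hs : c ⟨k, hk⟩ = c ⟨k+1, hk1⟩ ∘ σ ⟨k, hk⟩ := hcstep k hkQ
        rw [hs]
        exact (ih (k+1) hk1 (by omega)).comp (hσ _).injective
    -- the bridge, instantiated
    have bridge := aux_bridge σ Cf hCtop hCcomp (tupleExt 𝕜 Xt) (basisFlag 𝕜 b)
      hbase hXnrank hXnmono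
    constructor
    -- forward direction
    · intro hA
      simp only [flagSymbol] at hA
      intro k i
      have hkQle : k.1 ≤ Q := Nat.lt_succ_iff.mp k.2
      have HA : ∀ (l : ℕ) (hl : l < Q + 1), Q - (Q - k.1) < l → ∀ i' : Fin (nn l),
          schubertSigma (tupleExt 𝕜 Xt l)
            (indFlag Q (basisFlag 𝕜 b) (tupleExt 𝕜 Xt) (Q - l)) (i'.1 + 1) =
            (σ ⟨l, hl⟩ i' : ℕ) + 1 :=
        fun l hl _ i' => hA ⟨l, hl⟩ i'
      obtain ⟨m', hm'lt, h1, h2⟩ := bridge (Q - k.1) (by omega) HA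
        (tupleExt 𝕜 Xt k.1) (i.1+1)
        (hXnmono k.1 (Q - (Q - k.1)) (by omega)) (by omega)
        (by rw [hXnrank k.1 hkQle]; exact i.2)
      have hQk : Q - (Q - k.1) = k.1 := by omega
      rw [hQk] at hm'lt h2
      have hAk := hA k i
      have hm'eq : m' = ((σ k i : Fin (nn (k.1+1))) : ℕ) := by omega
      have hXtk : tupleExt 𝕜 Xt k.1 = Xt k := hXnl k.1 k.2
      rw [← hXtk, h2, hm'eq, ← hCcomp' k i, hCeq' k i]
    -- backward direction
    · intro hB
      have main : ∀ j (k : Fin (Q+1)), Q - j ≤ k.1 → ∀ i : Fin (nn k.1),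
          schubertSigma (tupleExt 𝕜 Xt k.1)
            (indFlag Q (basisFlag 𝕜 b) (tupleExt 𝕜 Xt) (Q - k.1)) (i.1 + 1) =
            (σ k i : ℕ) + 1 := by
        intro j
        induction j with
        | zero =>
          intro k hk i
          have hk2 := k.2
          have hkl : k = Fin.last Q := by
            apply Fin.ext
            simp only [Fin.val_last]
            omega
          subst hkl
          have h0' : Q - (Fin.last Q).1 = 0 := by simp
          rw [h0', hXnl _ (Fin.last Q).2]
          have hb' := hB (Fin.last Q) i
          rw [hclast] at hb'
          exact hb'
        | succ j ih =>
          intro k hk i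
          by_cases hcase : Q - j ≤ k.1
          · exact ih k hcase i
          · have hkQle : k.1 ≤ Q := Nat.lt_succ_iff.mp k.2
            have HA : ∀ (l : ℕ) (hl : l < Q + 1), Q - (Q - k.1) < l → ∀ i' : Fin (nn l),
                schubertSigma (tupleExt 𝕜 Xt l)
                  (indFlag Q (basisFlag 𝕜 b) (tupleExt 𝕜 Xt) (Q - l)) (i'.1 + 1) =
                  (σ ⟨l, hl⟩ i' : ℕ) + 1 := by
              intro l hl hgt i'
              refine ih ⟨l, hl⟩ ?_ i'
              show Q - j ≤ l
              omega
            obtain ⟨m', hm'lt, h1, h2⟩ := bridge (Q - k.1) (by omega) HA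
              (tupleExt 𝕜 Xt k.1) (i.1+1)
              (hXnmono k.1 (Q - (Q - k.1)) (by omega)) (by omega)
              (by rw [hXnrank k.1 hkQle]; exact i.2)
            have hQk : Q - (Q - k.1) = k.1 := by omega
            rw [hQk] at hm'lt h2
            have hb' := hB k i
            rw [← hXnl k.1 k.2] at hb'
            have he : Cf (k.1+1) m' = ((c k i : Fin (nn (Q+1))) : ℕ) := by omega
            have hlt2 : ((σ k i : Fin (nn (k.1+1))) : ℕ) < nn (k.1+1) := (σ k i).2
            have hk1 : k.1 + 1 < Q + 1 := by omega
            have he2 : ((c ⟨k.1+1, hk1⟩ ⟨m', hm'lt⟩ : Fin (nn (Q+1))) : ℕ) =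
                ((c ⟨k.1+1, hk1⟩ ⟨(σ k i : Fin (nn (k.1+1))).1, hlt2⟩ : Fin (nn (Q+1))) : ℕ) := by
              rw [← hCeq (k.1+1) hk1 m' hm'lt, ← hCeq (k.1+1) hk1 _ hlt2]
              rw [he, ← hCeq' k i, hCcomp' k i]
            have h3 : (⟨m', hm'lt⟩ : Fin (nn (k.1+1))) =
                ⟨(σ k i : Fin (nn (k.1+1))).1, hlt2⟩ :=
              cinj (Q - (k.1+1)) (k.1+1) hk1 rfl (Fin.val_injective he2)
            have hinj : m' = ((σ k i : Fin (nn (k.1+1))) : ℕ) := congrArg Fin.val h3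
            rw [h1]
            omega
      intro k i
      simp only [flagSymbol]
      exact main Q k (by omega) i
  constructor
  · rintro ⟨h1, h2⟩; exact ⟨h1, (keyiff h1).mp h2⟩
  · rintro ⟨h1, h2⟩; exact ⟨h1, (keyiff h1).mpr h2⟩
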